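/- Let μ be a locally finite Borel measure on ℂ and α > 1. Suppose there is a constant c such that μ(B(ξ, ε)) ≤ c·ε^α for every ε ∈ (0,1) and every ξ in the support of μ. Let E ⊂ ℂ be a bounded Borel set whose boundary ∂E is a rectifiable curve of finite length L. Then there is a constant C (depending on c, L, and the Besicovitch constant of ℝ²) such that for all small ε > 0, μ({z : dist(z, ∂E) ≤ ε}) ≤ C·ε^{α−1}. -/

import Mathlib

open MeasureTheory Metric Set
open scoped ENNReal

lemma null_of_no_support (μ : Measure ℂ) :
    μ {ξ : ℂ | ∃ r > (0:ℝ), μ (closedBall ξ r) = 0} = 0 := by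
  set U : Set ℂ := {ξ : ℂ | ∃ r > (0:ℝ), μ (closedBall ξ r) = 0} with hU
  have hcov : U ⊆ ⋃ ξ : U, ball (ξ : ℂ) (Classical.choose ξ.2) := by
    intro x hx
    refine mem_iUnion.2 ⟨⟨x, hx⟩, ?_⟩
    exact mem_ball_self (Classical.choose_spec (⟨x, hx⟩ : U).2).1
  obtain ⟨T, hTc, hTU⟩ := TopologicalSpace.isOpen_iUnion_countable
    (fun ξ : U => ball (ξ : ℂ) (Classical.choose ξ.2)) (fun ξ => isOpen_ball)
  have hnull : μ (⋃ ξ : U, ball (ξ : ℂ) (Classical.choose ξ.2)) = 0 := by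
    rw [← hTU]
    refine (measure_biUnion_null_iff hTc).2 fun ξ _ => ?_
    exact measure_mono_null ball_subset_closedBall (Classical.choose_spec ξ.2).2
  exact measure_mono_null hcov hnull

/-- one ball estimate -/
lemma ball_est (μ : Measure ℂ) (α c : ℝ) (hc : 0 < c)
    (hball : ∀ ξ : ℂ, (∀ r > (0:ℝ), μ (Metric.closedBall ξ r) ≠ 0) →
      ∀ ε : ℝ, 0 < ε → ε < 1 → μ (Metric.closedBall ξ ε) ≤ ENNReal.ofReal (c * ε ^ α))
    (x : ℂ) (ε : ℝ) (hε : 0 < ε) (hε4 : 4 * ε < 1) :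
    μ (closedBall x (2 * ε)) ≤ ENNReal.ofReal (c * (4 * ε) ^ α) := by
  by_cases h : ∃ ξ ∈ closedBall x (2 * ε), ∀ r > (0:ℝ), μ (closedBall ξ r) ≠ 0
  · obtain ⟨ξ, hξ, hξs⟩ := h
    have hsub : closedBall x (2 * ε) ⊆ closedBall ξ (4 * ε) := by
      intro y hy
      have h1 : dist y ξ ≤ dist y x + dist x ξ := dist_triangle y x ξ
      have h2 : dist x ξ ≤ 2 * ε := by rw [dist_comm]; exact hξ
      have h3 : dist y x ≤ 2 * ε := hy
      simp only [mem_closedBall]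
      linarith
    calc μ (closedBall x (2 * ε)) ≤ μ (closedBall ξ (4 * ε)) := measure_mono hsub
      _ ≤ ENNReal.ofReal (c * (4 * ε) ^ α) := hball ξ hξs (4 * ε) (by linarith) hε4
  · push_neg at h
    have hsub : closedBall x (2 * ε) ⊆ {ξ : ℂ | ∃ r > (0:ℝ), μ (closedBall ξ r) = 0} := by
      intro y hy
      obtain ⟨r, hr, hr0⟩ := h y hy
      exact ⟨r, hr, hr0⟩
    rw [measure_mono_null hsub (null_of_no_support μ)]
    exact zero_le



/-- If a locally finite Borel measure `μ` on `ℂ` satisfies `μ(B(ξ, ε)) ≤ c ε^α` (with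
`α > 1`) at every point `ξ` of its support, and `E ⊂ ℂ` is a bounded Borel set whose
boundary is a rectifiable curve, then the measure of the `ε`-neighborhood of `∂E` is
`O(ε^{α-1})`. -/
theorem stmt_13 (μ : MeasureTheory.Measure ℂ) [MeasureTheory.IsLocallyFiniteMeasure μ]
    (α c : ℝ) (hα : 1 < α) (hc : 0 < c)
    (hball : ∀ ξ : ℂ, (∀ r > (0:ℝ), μ (Metric.closedBall ξ r) ≠ 0) →
      ∀ ε : ℝ, 0 < ε → ε < 1 → μ (Metric.closedBall ξ ε) ≤ ENNReal.ofReal (c * ε ^ α))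
    (E : Set ℂ) (hE : Bornology.IsBounded E)
    (L : NNReal) (γ : ℝ → ℂ) (hγ : LipschitzOnWith L γ (Set.Icc 0 1))
    (hbd : frontier E = γ '' Set.Icc 0 1) :
    ∃ C > (0:ℝ), ∃ ε₀ > (0:ℝ), ∀ ε : ℝ, 0 < ε → ε < ε₀ →
      μ {z : ℂ | Metric.infDist z (frontier E) ≤ ε} ≤ ENNReal.ofReal (C * ε ^ (α - 1)) := by
  refine ⟨c * 4 ^ α * ((L : ℝ) + 1), by positivity, 1/4, by norm_num, fun ε hε hε4 => ?_⟩
  -- the boundary is a nonempty compact set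
  have hFc : IsCompact (frontier E) := by
    rw [hbd]; exact (isCompact_Icc).image_of_continuousOn hγ.continuousOn
  have hFne : (frontier E).Nonempty := by
    rw [hbd]; exact ⟨γ 0, 0, ⟨le_refl 0, zero_le_one⟩, rfl⟩
  -- number of pieces
  set N : ℕ := ⌈(L : ℝ) / ε⌉₊ + 1 with hN
  have hN0 : 0 < N := Nat.succ_pos _
  have hNR : (0:ℝ) < N := Nat.cast_pos.2 hN0
  have hLN : (L : ℝ) ≤ N * ε := by
    have h1 : (L : ℝ) / ε ≤ (⌈(L : ℝ) / ε⌉₊ : ℝ) := Nat.le_ceil _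
    have h2 : ((⌈(L : ℝ) / ε⌉₊ : ℝ)) ≤ (N : ℝ) := by
      rw [hN]; push_cast; linarith
    have := le_trans h1 h2
    calc (L : ℝ) = (L : ℝ) / ε * ε := by field_simp
      _ ≤ (N : ℝ) * ε := by nlinarith
  have hNε : (N : ℝ) * ε ≤ (L : ℝ) + 1 := by
    have h1 : (⌈(L : ℝ) / ε⌉₊ : ℝ) < (L : ℝ) / ε + 1 :=
      Nat.ceil_lt_add_one (by positivity)
    have h2 : (N : ℝ) < (L : ℝ) / ε + 2 := by rw [hN]; push_cast; linarith
    have h3 : (N : ℝ) * ε < ((L : ℝ) / ε + 2) * ε := by nlinarith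
    have h4 : ((L : ℝ) / ε + 2) * ε = (L : ℝ) + 2 * ε := by field_simp
    nlinarith
  -- covering
  have hcover : {z : ℂ | Metric.infDist z (frontier E) ≤ ε} ⊆
      ⋃ k ∈ Finset.range N, closedBall (γ ((k : ℝ) / N)) (2 * ε) := by
    intro z hz
    obtain ⟨w, hwF, hwd⟩ := hFc.exists_infDist_eq_dist hFne z
    have hzw : dist z w ≤ ε := by rw [← hwd]; exact hz
    rw [hbd] at hwF
    obtain ⟨t, ht, rfl⟩ := hwF
    set k : ℕ := min ⌊t * N⌋₊ (N - 1) with hk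
    have hkN : k < N := lt_of_le_of_lt (min_le_right _ _) (Nat.sub_lt hN0 one_pos)
    have htk : |t - (k : ℝ) / N| ≤ 1 / N := by
      have hklo : (k : ℝ) / N ≤ t := by
        have : (k : ℝ) ≤ t * N := by
          calc (k : ℝ) ≤ (⌊t * N⌋₊ : ℝ) := Nat.cast_le.2 (min_le_left _ _)
            _ ≤ t * N := Nat.floor_le (by nlinarith [ht.1])
        rw [div_le_iff₀ hNR]; linarith
      have hkhi : t ≤ ((k : ℝ) + 1) / N := by
        by_cases hcase : ⌊t * N⌋₊ ≤ N - 1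
        · have hke : k = ⌊t * N⌋₊ := min_eq_left hcase
          have : t * N < (k : ℝ) + 1 := by
            rw [hke]; exact_mod_cast Nat.lt_floor_add_one (t * N)
          rw [le_div_iff₀ hNR]; linarith
        · push_neg at hcase
          have hke : k = N - 1 := min_eq_right (le_of_lt hcase)
          have hkcast : ((k : ℝ) + 1) = N := by
            rw [hke]; push_cast [Nat.cast_sub hN0]; ring
          have ht1 : t ≤ 1 := ht.2
          rw [hkcast, le_div_iff₀ hNR]; nlinarith
      rw [abs_le]
      have hdd : ((k : ℝ) + 1) / N = (k : ℝ) / N + 1 / N := by ring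
      have h1N : (0:ℝ) ≤ 1 / N := by positivity
      constructor
      · linarith
      · linarith
    have htk' : t - (k : ℝ) / N ≤ 1 / N := le_trans (le_abs_self _) htk
    have hkmem : (k : ℝ) / N ∈ Set.Icc (0:ℝ) 1 := by
      constructor
      · positivity
      · rw [div_le_one hNR]; exact_mod_cast Nat.cast_le.2 hkN.le
    have hlip : dist (γ t) (γ ((k : ℝ) / N)) ≤ (L : ℝ) * |t - (k : ℝ) / N| := by
      have := hγ.dist_le_mul t ht ((k : ℝ) / N) hkmem
      rwa [Real.dist_eq] at this
    have hlip2 : dist (γ t) (γ ((k : ℝ) / N)) ≤ ε := by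
      calc dist (γ t) (γ ((k : ℝ) / N)) ≤ (L : ℝ) * |t - (k : ℝ) / N| := hlip
        _ ≤ (L : ℝ) * (1 / N) := by
            exact mul_le_mul_of_nonneg_left htk (NNReal.coe_nonneg L)
        _ ≤ ε := by rw [mul_one_div, div_le_iff₀ hNR]; linarith
    refine Set.mem_biUnion (Finset.mem_range.2 hkN) ?_
    simp only [mem_closedBall]
    calc dist z (γ ((k : ℝ) / N)) ≤ dist z (γ t) + dist (γ t) (γ ((k : ℝ) / N)) :=
          dist_triangle _ _ _
      _ ≤ ε + ε := add_le_add hzw hlip2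
      _ = 2 * ε := by ring
  -- measure estimate
  have hε1 : 4 * ε < 1 := by linarith
  calc μ {z : ℂ | Metric.infDist z (frontier E) ≤ ε}
      ≤ μ (⋃ k ∈ Finset.range N, closedBall (γ ((k : ℝ) / N)) (2 * ε)) :=
        measure_mono hcover
    _ ≤ ∑ k ∈ Finset.range N, μ (closedBall (γ ((k : ℝ) / N)) (2 * ε)) :=
        measure_biUnion_finset_le _ _
    _ ≤ ∑ _k ∈ Finset.range N, ENNReal.ofReal (c * (4 * ε) ^ α) :=
        Finset.sum_le_sum fun k _ => ball_est μ α c hc hball _ ε hε hε1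
    _ = (N : ℝ≥0∞) * ENNReal.ofReal (c * (4 * ε) ^ α) := by
        rw [Finset.sum_const, Finset.card_range, nsmul_eq_mul]
    _ = ENNReal.ofReal ((N : ℝ) * (c * (4 * ε) ^ α)) := by
        rw [← ENNReal.ofReal_natCast N, ← ENNReal.ofReal_mul (by positivity)]
    _ ≤ ENNReal.ofReal (c * 4 ^ α * ((L : ℝ) + 1) * ε ^ (α - 1)) := by
        apply ENNReal.ofReal_le_ofReal
        have h4 : (4 * ε) ^ α = 4 ^ α * ε ^ α := Real.mul_rpow (by norm_num) hε.le
        have hεα : ε ^ α = ε * ε ^ (α - 1) := by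
          rw [Real.rpow_sub hε, Real.rpow_one]
          field_simp
        calc (N : ℝ) * (c * (4 * ε) ^ α) = c * 4 ^ α * ((N : ℝ) * ε) * ε ^ (α - 1) := by
              rw [h4, hεα]; ring
          _ ≤ c * 4 ^ α * ((L : ℝ) + 1) * ε ^ (α - 1) := by
              have h0 : (0:ℝ) ≤ ε ^ (α - 1) := Real.rpow_nonneg hε.le _
              have h1 : (0:ℝ) ≤ c * 4 ^ α := by positivity
              exact mul_le_mul_of_nonneg_right
                (mul_le_mul_of_nonneg_left hNε h1) h0
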